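/- Let ω_1, …, ω_N be positive reals with pairwise distinct squares ω_i², let A, B, C be as follows: A is the 2N×2N block-diagonal matrix with 2×2 blocks [[0,1],[−ω_i²,0]], B ∈ ℝ^{2N} has entries B_{2i−1}=0, B_{2i}=1, and C = (c_1, 0, …, c_N, 0) with c_k = (−1)^{N+1} ω_k^{2N} Π_{i≠k}(ω_i² − ω_k²)^{−1}. Define 𝔢_i = ((−1)^{i−1}/(i−1)!) (A+BC)^{i−1} B for i = 1, …, 2N. Then the vectors 𝔢_1, …, 𝔢_{2N} form a basis of ℝ^{2N}. -/
import Mathlib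


open Matrix

/-- The `2N × 2N` block-diagonal system matrix of `N` oscillators, with `2×2` blocks
`[[0,1],[-ω_i², 0]]` (0-based indexing: row `2i` is the `x_i`-row, row `2i+1` the `y_i`-row). -/
noncomputable def oscA (N : ℕ) (ω : Fin N → ℝ) : Matrix (Fin (2 * N)) (Fin (2 * N)) ℝ :=
  Matrix.of fun i j =>
    if i.val % 2 = 0 ∧ j.val = i.val + 1 then 1
    else if i.val % 2 = 1 ∧ i.val = j.val + 1 then
      -(ω ⟨i.val / 2, by have := i.isLt; omega⟩) ^ 2
    else 0

/-- The control vector `B ∈ ℝ^{2N}` with `B_{2i-1} = 0`, `B_{2i} = 1` (1-based). -/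
def oscB (N : ℕ) : Fin (2 * N) → ℝ := fun i => if i.val % 2 = 1 then 1 else 0

/-- The coefficient `c_k = (-1)^{N+1} ω_k^{2N} Π_{i≠k} (ω_i² - ω_k²)⁻¹`. -/
noncomputable def oscc (N : ℕ) (ω : Fin N → ℝ) (k : Fin N) : ℝ :=
  (-1) ^ (N + 1) * ω k ^ (2 * N) * ∏ i ∈ Finset.univ.erase k, ((ω i) ^ 2 - (ω k) ^ 2)⁻¹

/-- The row vector `C = (c_1, 0, c_2, 0, …, c_N, 0)`. -/
noncomputable def oscC (N : ℕ) (ω : Fin N → ℝ) : Fin (2 * N) → ℝ := fun i =>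
  if i.val % 2 = 0 then oscc N ω ⟨i.val / 2, by have := i.isLt; omega⟩ else 0

/-- The vectors `𝔢_i = ((-1)^{i-1}/(i-1)!) (A+BC)^{i-1} B`, `i = 1, …, 2N`
(here indexed by `k : Fin (2N)` with `k = i - 1`). -/
noncomputable def oscE (N : ℕ) (ω : Fin N → ℝ) (k : Fin (2 * N)) : Fin (2 * N) → ℝ :=
  ((-1 : ℝ) ^ (k : ℕ) / (Nat.factorial (k : ℕ) : ℝ)) •
    ((oscA N ω + vecMulVec (oscB N) (oscC N ω)) ^ (k : ℕ)).mulVec (oscB N)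

/-! ### Auxiliary material -/

/-- Explicit formula for `A^k B`. -/
noncomputable def oscK (N : ℕ) (ω : Fin N → ℝ) (k : ℕ) : Fin (2 * N) → ℝ := fun j =>
  if (j.val + k) % 2 = 1 then (-(ω ⟨j.val / 2, by have := j.isLt; omega⟩) ^ 2) ^ (k / 2) else 0

theorem oscA_apply_one {N : ℕ} {ω : Fin N → ℝ} {j l : Fin (2 * N)}
    (hmod : j.val % 2 = 0) (h : l.val = j.val + 1) : oscA N ω j l = 1 := by
  simp only [oscA, Matrix.of_apply]; rw [if_pos ⟨hmod, h⟩]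

theorem oscA_apply_omega {N : ℕ} {ω : Fin N → ℝ} {j l : Fin (2 * N)} {i : Fin N}
    (hmod : j.val % 2 = 1) (h : j.val = l.val + 1) (hi : i.val = j.val / 2) :
    oscA N ω j l = -(ω i) ^ 2 := by
  rcases i with ⟨iv, hiv⟩
  simp only [Fin.val_mk] at hi
  subst hi
  simp only [oscA, Matrix.of_apply]
  rw [if_neg (by omega), if_pos ⟨hmod, h⟩]

theorem oscA_apply_zero {N : ℕ} {ω : Fin N → ℝ} {j l : Fin (2 * N)}
    (h1 : ¬(j.val % 2 = 0 ∧ l.val = j.val + 1)) (h2 : ¬(j.val % 2 = 1 ∧ j.val = l.val + 1)) :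
    oscA N ω j l = 0 := by
  simp only [oscA, Matrix.of_apply]
  rw [if_neg h1, if_neg h2]

theorem oscK_apply_pow {N : ℕ} {ω : Fin N → ℝ} {k : ℕ} {j : Fin (2 * N)} {i : Fin N}
    (h : (j.val + k) % 2 = 1) (hi : i.val = j.val / 2) :
    oscK N ω k j = (-(ω i) ^ 2) ^ (k / 2) := by
  rcases i with ⟨iv, hiv⟩
  simp only [Fin.val_mk] at hi
  subst hi
  simp only [oscK]
  rw [if_pos h]

theorem oscK_apply_zero {N : ℕ} {ω : Fin N → ℝ} {k : ℕ} {j : Fin (2 * N)}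
    (h : (j.val + k) % 2 ≠ 1) : oscK N ω k j = 0 := by
  simp only [oscK]; rw [if_neg h]

theorem oscK_zero (N : ℕ) (ω : Fin N → ℝ) : oscK N ω 0 = oscB N := by
  funext j
  rcases Nat.even_or_odd j.val with he | ho
  · have h := Nat.even_iff.mp he
    rw [oscK_apply_zero (by omega)]; simp [oscB, h]
  · have h := Nat.odd_iff.mp ho
    have := j.isLt
    rw [oscK_apply_pow (by omega) (rfl : (⟨j.val / 2, by omega⟩ : Fin N).val = j.val / 2)]
    simp [oscB, h]

theorem mulVec_oscK (N : ℕ) (ω : Fin N → ℝ) (k : ℕ) :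
    (oscA N ω).mulVec (oscK N ω k) = oscK N ω (k + 1) := by
  funext j
  rw [mulVec, dotProduct]
  have hjlt := j.isLt
  rcases Nat.even_or_odd j.val with he | ho
  · have hmod : j.val % 2 = 0 := Nat.even_iff.mp he
    have hj1 : j.val + 1 < 2 * N := by omega
    have hiN : j.val / 2 < N := by omega
    rw [Finset.sum_eq_single ⟨j.val + 1, hj1⟩]
    · rw [oscA_apply_one hmod rfl, one_mul]
      by_cases hc : (j.val + (k + 1)) % 2 = 1
      · rw [oscK_apply_pow (i := ⟨j.val / 2, hiN⟩) (by simpa using (by omega : (j.val + 1 + k) % 2 = 1)) (by simp; omega),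
          oscK_apply_pow (i := ⟨j.val / 2, hiN⟩) hc rfl]
        congr 1
        omega
      · rw [oscK_apply_zero (by simpa using (by omega : ¬(j.val + 1 + k) % 2 = 1)),
          oscK_apply_zero hc]
    · intro b _ hb
      have hbv : b.val ≠ j.val + 1 := fun h => hb (Fin.ext h)
      rw [oscA_apply_zero (by omega) (by omega), zero_mul]
    · simp
  · have hmod : j.val % 2 = 1 := Nat.odd_iff.mp ho
    have hj1 : j.val - 1 < 2 * N := by omega
    have hiN : j.val / 2 < N := by omega
    rw [Finset.sum_eq_single ⟨j.val - 1, hj1⟩]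
    · rw [oscA_apply_omega (i := ⟨j.val / 2, hiN⟩) hmod (by simp; omega) rfl]
      by_cases hc : (j.val + (k + 1)) % 2 = 1
      · rw [oscK_apply_pow (i := ⟨j.val / 2, hiN⟩) (by simpa using (by omega : (j.val - 1 + k) % 2 = 1)) (by simp; omega),
          oscK_apply_pow (i := ⟨j.val / 2, hiN⟩) hc rfl]
        have hk2 : (k + 1) / 2 = k / 2 + 1 := by omega
        rw [hk2, pow_succ]
        ring
      · rw [oscK_apply_zero (by simpa using (by omega : ¬(j.val - 1 + k) % 2 = 1)),
          oscK_apply_zero hc, mul_zero]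
    · intro b _ hb
      have hbv : b.val ≠ j.val - 1 := fun h => hb (Fin.ext h)
      rw [oscA_apply_zero (by omega) (by omega), zero_mul]
    · simp

theorem pow_mulVec_oscB (N : ℕ) (ω : Fin N → ℝ) (k : ℕ) :
    ((oscA N ω) ^ k).mulVec (oscB N) = oscK N ω k := by
  induction k with
  | zero => simp [oscK_zero]
  | succ n ih =>
    rw [pow_succ', ← Matrix.mulVec_mulVec, ih, mulVec_oscK]

/-- interleaving equivalence: `(i, b) ↦ 2i + b`. -/
def oscEquiv (N : ℕ) : Fin N × Fin 2 ≃ Fin (2 * N) :=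
  finProdFinEquiv.trans (finCongr (mul_comm N 2))

theorem oscEquiv_val (N : ℕ) (i : Fin N) (b : Fin 2) :
    (oscEquiv N (i, b)).val = 2 * i.val + b.val := by
  simp [oscEquiv, finProdFinEquiv]; omega

theorem oscK_linearIndependent (N : ℕ) (hN : 0 < N) (ω : Fin N → ℝ)
    (hdist : ∀ i j : Fin N, i ≠ j → ω i ^ 2 ≠ ω j ^ 2) :
    LinearIndependent ℝ (fun k : Fin (2 * N) => oscK N ω k.val) := by
  set y : Fin N → ℝ := fun i => -(ω i) ^ 2 with hy
  have hyinj : Function.Injective y := by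
    intro i j h
    by_contra hne
    exact hdist i j hne (by have := h; simp only [hy] at this; linarith)
  set V := Matrix.vandermonde y with hV
  have hdet : V.det ≠ 0 := by
    rw [hV, Matrix.det_vandermonde]
    apply Finset.prod_ne_zero_iff.mpr
    intro i _
    apply Finset.prod_ne_zero_iff.mpr
    intro j hj
    rw [Finset.mem_Ioi] at hj
    exact sub_ne_zero_of_ne (fun h => (ne_of_gt hj) (hyinj h))
  have hVinj : Function.Injective V.mulVec :=
    Matrix.mulVec_injective_iff_isUnit.mpr
      ((Matrix.isUnit_iff_isUnit_det V).mpr (isUnit_iff_ne_zero.mpr hdet))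
  rw [Fintype.linearIndependent_iff]
  intro a ha
  have key : ∀ j : Fin (2 * N), ∑ i : Fin N, ∑ b : Fin 2,
      a (oscEquiv N (i, b)) * oscK N ω (oscEquiv N (i, b)).val j = 0 := by
    intro j
    have := congrFun ha j
    rw [Finset.sum_apply] at this
    calc ∑ i : Fin N, ∑ b : Fin 2,
        a (oscEquiv N (i, b)) * oscK N ω (oscEquiv N (i, b)).val j
        = ∑ p : Fin N × Fin 2, a (oscEquiv N p) * oscK N ω (oscEquiv N p).val j := by
          rw [Fintype.sum_prod_type]
      _ = ∑ k : Fin (2 * N), a k * oscK N ω k.val j := by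
          rw [← Equiv.sum_comp (oscEquiv N) (fun k => a k * oscK N ω k.val j)]
      _ = 0 := by simpa using this
  have hb0 : ∀ i : Fin N, a (oscEquiv N (i, 0)) = 0 := by
    have hz : V.mulVec (fun i => a (oscEquiv N (i, 0))) = 0 := by
      funext l
      have hlt : 2 * l.val + 1 < 2 * N := by have := l.isLt; omega
      have hk := key ⟨2 * l.val + 1, hlt⟩
      rw [Matrix.mulVec, dotProduct, Pi.zero_apply]
      rw [← hk]
      apply Finset.sum_congr rfl
      intro i _
      rw [Fin.sum_univ_two]
      have e0 : (oscEquiv N (i, (0 : Fin 2))).val = 2 * i.val := by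
        rw [oscEquiv_val]; simp
      have e1 : (oscEquiv N (i, (1 : Fin 2))).val = 2 * i.val + 1 := by
        rw [oscEquiv_val]; simp
      have h0 : oscK N ω (oscEquiv N (i, 0)).val ⟨2 * l.val + 1, hlt⟩ = y l ^ i.val := by
        rw [oscK_apply_pow (i := l) (by simp only [e0, Fin.val_mk]; omega)
          (by simp only [Fin.val_mk]; omega), e0, hy]
        norm_num [Nat.mul_div_cancel_left]
      have h1 : oscK N ω (oscEquiv N (i, 1)).val ⟨2 * l.val + 1, hlt⟩ = 0 :=
        oscK_apply_zero (by simp only [e1, Fin.val_mk]; omega)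
      rw [h0, h1, mul_zero, add_zero, hV, Matrix.vandermonde_apply]
      ring
    have := hVinj (by rw [hz, Matrix.mulVec_zero] : V.mulVec _ = V.mulVec 0)
    intro i; exact congrFun this i
  have hb1 : ∀ i : Fin N, a (oscEquiv N (i, 1)) = 0 := by
    have hz : V.mulVec (fun i => a (oscEquiv N (i, 1))) = 0 := by
      funext l
      have hlt : 2 * l.val < 2 * N := by have := l.isLt; omega
      have hk := key ⟨2 * l.val, hlt⟩
      rw [Matrix.mulVec, dotProduct, Pi.zero_apply]
      rw [← hk]
      apply Finset.sum_congr rfl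
      intro i _
      rw [Fin.sum_univ_two]
      have e0 : (oscEquiv N (i, (0 : Fin 2))).val = 2 * i.val := by
        rw [oscEquiv_val]; simp
      have e1 : (oscEquiv N (i, (1 : Fin 2))).val = 2 * i.val + 1 := by
        rw [oscEquiv_val]; simp
      have h0 : oscK N ω (oscEquiv N (i, 0)).val ⟨2 * l.val, hlt⟩ = 0 :=
        oscK_apply_zero (by simp only [e0, Fin.val_mk]; omega)
      have h1 : oscK N ω (oscEquiv N (i, 1)).val ⟨2 * l.val, hlt⟩ = y l ^ i.val := by
        rw [oscK_apply_pow (i := l) (by simp only [e1, Fin.val_mk]; omega)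
          (by simp only [Fin.val_mk]; omega), e1, hy]
        have : (2 * i.val + 1) / 2 = i.val := by omega
        rw [this]
      rw [h0, h1, mul_zero, zero_add, hV, Matrix.vandermonde_apply]
      ring
    have := hVinj (by rw [hz, Matrix.mulVec_zero] : V.mulVec _ = V.mulVec 0)
    intro i; exact congrFun this i
  intro k
  obtain ⟨⟨i, b⟩, rfl⟩ := (oscEquiv N).surjective k
  fin_cases b
  · exact hb0 i
  · exact hb1 i

theorem vecMulVec_mulVec' {n : Type*} [Fintype n] (w v u : n → ℝ) :
    (vecMulVec w v).mulVec u = (v ⬝ᵥ u) • w := by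
  funext i
  simp only [mulVec, dotProduct, vecMulVec_apply, Pi.smul_apply, smul_eq_mul]
  rw [Finset.sum_mul]
  exact Finset.sum_congr rfl fun j _ => by ring

theorem pow_mulVec_mem_span {n : Type*} [Fintype n] [DecidableEq n]
    (A : Matrix n n ℝ) (B C : n → ℝ) (k : ℕ) :
    (A ^ k).mulVec B ∈ Submodule.span ℝ
      ((fun j : ℕ => ((A + vecMulVec B C) ^ j).mulVec B) '' Set.Iic k) := by
  set M := A + vecMulVec B C with hM
  induction k with
  | zero =>
    exact Submodule.subset_span ⟨0, Set.mem_Iic.mpr le_rfl, by simp⟩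
  | succ k ih =>
    have hstep : M.mulVec ((A ^ k).mulVec B) ∈ Submodule.span ℝ
        ((fun j : ℕ => (M ^ j).mulVec B) '' Set.Iic (k + 1)) := by
      have hmem : M.mulVec ((A ^ k).mulVec B) ∈ Submodule.map M.mulVecLin
          (Submodule.span ℝ ((fun j : ℕ => (M ^ j).mulVec B) '' Set.Iic k)) :=
        ⟨_, ih, rfl⟩
      rw [Submodule.map_span] at hmem
      refine Submodule.span_mono ?_ hmem
      rintro x ⟨_, ⟨j, hj, rfl⟩, rfl⟩
      exact ⟨j + 1, Set.mem_Iic.mpr (Nat.succ_le_succ (Set.mem_Iic.mp hj)),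
        by simp only [mulVecLin_apply, pow_succ', Matrix.mulVec_mulVec]⟩
    have hB : B ∈ Submodule.span ℝ
        ((fun j : ℕ => (M ^ j).mulVec B) '' Set.Iic (k + 1)) :=
      Submodule.subset_span ⟨0, Set.mem_Iic.mpr (Nat.zero_le _), by simp⟩
    have heq : (A ^ (k + 1)).mulVec B =
        M.mulVec ((A ^ k).mulVec B) - (C ⬝ᵥ ((A ^ k).mulVec B)) • B := by
      rw [pow_succ', ← Matrix.mulVec_mulVec, hM, Matrix.add_mulVec, vecMulVec_mulVec']
      abel
    rw [heq]
    exact Submodule.sub_mem _ hstep (Submodule.smul_mem _ _ hB)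

/-- The vectors `𝔢_1, …, 𝔢_{2N}` form a basis of `ℝ^{2N}`. -/
theorem oscE_form_basis (N : ℕ) (hN : 0 < N) (ω : Fin N → ℝ)
    (hpos : ∀ i, 0 < ω i) (hdist : ∀ i j : Fin N, i ≠ j → ω i ^ 2 ≠ ω j ^ 2) :
    LinearIndependent ℝ (oscE N ω) ∧
    Submodule.span ℝ (Set.range (oscE N ω)) = ⊤ := by
  haveI : Nonempty (Fin (2 * N)) := ⟨⟨0, by omega⟩⟩
  have card_eq : Fintype.card (Fin (2 * N)) = Module.finrank ℝ (Fin (2 * N) → ℝ) := by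
    simp [Module.finrank_pi]
  set M := oscA N ω + vecMulVec (oscB N) (oscC N ω) with hM
  set v : Fin (2 * N) → (Fin (2 * N) → ℝ) := fun k => (M ^ k.val).mulVec (oscB N) with hv
  set S := Submodule.span ℝ (Set.range v) with hS
  -- the Krylov vectors of A span everything
  have hKspan : Submodule.span ℝ (Set.range fun k : Fin (2 * N) => oscK N ω k.val) = ⊤ :=
    (oscK_linearIndependent N hN ω hdist).span_eq_top_of_card_eq_finrank card_eq
  -- hence S = ⊤
  have htop : (⊤ : Submodule ℝ (Fin (2 * N) → ℝ)) ≤ S := by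
    rw [← hKspan]
    apply Submodule.span_le.mpr
    rintro x ⟨k, rfl⟩
    show oscK N ω k.val ∈ (S : Set (Fin (2 * N) → ℝ))
    rw [← pow_mulVec_oscB]
    have hmem := pow_mulVec_mem_span (oscA N ω) (oscB N) (oscC N ω) k.val
    rw [← hM] at hmem
    refine Submodule.span_le.mpr ?_ hmem
    rintro x ⟨j, hj, rfl⟩
    exact Submodule.subset_span ⟨⟨j, lt_of_le_of_lt (Set.mem_Iic.mp hj) k.isLt⟩, rfl⟩
  -- the span of the 𝔢's equals S
  have hcne : ∀ k : Fin (2 * N), ((-1 : ℝ) ^ (k : ℕ) / (Nat.factorial (k : ℕ) : ℝ)) ≠ 0 :=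
    fun k => div_ne_zero (pow_ne_zero _ (by norm_num))
      (Nat.cast_ne_zero.mpr (Nat.factorial_ne_zero _))
  have hoscE : ∀ k : Fin (2 * N),
      oscE N ω k = ((-1 : ℝ) ^ (k : ℕ) / (Nat.factorial (k : ℕ) : ℝ)) • v k := by
    intro k; rfl
  have hES : Submodule.span ℝ (Set.range (oscE N ω)) = S := by
    apply le_antisymm
    · apply Submodule.span_le.mpr
      rintro x ⟨k, rfl⟩
      rw [hoscE k]
      exact Submodule.smul_mem _ _ (Submodule.subset_span ⟨k, rfl⟩)
    · apply Submodule.span_le.mpr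
      rintro x ⟨k, rfl⟩
      have : v k = ((-1 : ℝ) ^ (k : ℕ) / (Nat.factorial (k : ℕ) : ℝ))⁻¹ • oscE N ω k := by
        rw [hoscE k, smul_smul, inv_mul_cancel₀ (hcne k), one_smul]
      rw [this]
      exact Submodule.smul_mem _ _ (Submodule.subset_span ⟨k, rfl⟩)
  have hspan : Submodule.span ℝ (Set.range (oscE N ω)) = ⊤ := by
    rw [hES]; exact top_unique htop
  exact ⟨linearIndependent_of_top_le_span_of_card_eq_finrank hspan.ge card_eq, hspan⟩
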